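/- Fix R > 0 and define u(x₁,x₂,t) = max(x₁², ξ(t)²) + max(x₂², ξ(t)²) − 2R² with ξ(t) = (3/2)^{1/3} t^{1/3}. Then for every t > 0 the function (x₁,x₂) ↦ u(x₁,x₂,t) is not differentiable at the point (ξ(t), 0); consequently u(·,t) is Lipschitz on bounded sets but not continuously differentiable on ℝ². -/

import Mathlib

open Set Metric

/-- for every t > 0 the explicit solution
u(x₁,x₂,t) = max(x₁², ξ(t)²) + max(x₂², ξ(t)²) − 2R² is not differentiable at
(ξ(t), 0); consequently u(·,t) is Lipschitz on bounded sets but not C¹ on ℝ². -/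
theorem stmt2 (R : ℝ) (hR : 0 < R)
    (ξ : ℝ → ℝ)
    (hξ : ∀ t : ℝ, ξ t = (3/2 : ℝ) ^ ((1:ℝ)/3) * t ^ ((1:ℝ)/3))
    (u : ℝ × ℝ → ℝ → ℝ)
    (hu : ∀ (x : ℝ × ℝ) (t : ℝ),
      u x t = max (x.1^2) ((ξ t)^2) + max (x.2^2) ((ξ t)^2) - 2 * R^2) :
    ∀ t : ℝ, 0 < t →
      ¬ DifferentiableAt ℝ (fun x : ℝ × ℝ => u x t) (ξ t, 0)
      ∧ (∀ s : Set (ℝ × ℝ), Bornology.IsBounded s →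
          ∃ K : NNReal, LipschitzOnWith K (fun x : ℝ × ℝ => u x t) s)
      ∧ ¬ ContDiff ℝ 1 (fun x : ℝ × ℝ => u x t) := by
  intro t ht
  set c : ℝ := ξ t with hcdef
  have hc : 0 < c := by
    rw [hcdef, hξ]
    positivity
  have key : ¬ DifferentiableAt ℝ (fun x : ℝ × ℝ => u x t) (c, 0) := by
    intro h
    have hmap : DifferentiableAt ℝ (fun y : ℝ => ((y, 0) : ℝ × ℝ)) c :=
      differentiableAt_id.prodMk (differentiableAt_const 0)
    have hg : DifferentiableAt ℝ (fun y : ℝ => u (y, 0) t) c := by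
      have := h.comp c hmap; exact this
    set g : ℝ → ℝ := fun y => u (y, 0) t with hgdef
    have hgval : ∀ y : ℝ, g y = max (y ^ 2) (c ^ 2) + c ^ 2 - 2 * R ^ 2 := by
      intro y
      have h0 : max ((0 : ℝ) ^ 2) (c ^ 2) = c ^ 2 := by
        simpa using sq_nonneg c
      simp only [hgdef, hu, ← hcdef]
      rw [h0]
    have hgc : g c = c ^ 2 + c ^ 2 - 2 * R ^ 2 := by
      rw [hgval, max_self]
    have hd : HasDerivAt g (deriv g c) c := hg.hasDerivAt
    -- left derivative is 0
    have hleft : HasDerivWithinAt g 0 (Iio c) c := by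
      have hconst : HasDerivWithinAt (fun _ : ℝ => c ^ 2 + c ^ 2 - 2 * R ^ 2)
          0 (Iio c) c := hasDerivWithinAt_const _ _ _
      have hev : g =ᶠ[nhdsWithin c (Iio c)] (fun _ => c ^ 2 + c ^ 2 - 2 * R ^ 2) := by
        filter_upwards [Ioo_mem_nhdsLT_of_mem ⟨neg_lt_self hc, le_refl c⟩] with y hy
        have hy2 : y ^ 2 ≤ c ^ 2 := by nlinarith [hy.1, hy.2]
        rw [hgval, max_eq_right hy2]
      exact hconst.congr_of_eventuallyEq hev hgc
    -- right derivative is 2c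
    have hright : HasDerivWithinAt g (2 * c) (Ioi c) c := by
      have hq : HasDerivAt (fun y : ℝ => y ^ 2 + (c ^ 2 - 2 * R ^ 2)) (2 * c) c := by
        simpa using (hasDerivAt_pow 2 c).add_const (c ^ 2 - 2 * R ^ 2)
      have hev : g =ᶠ[nhdsWithin c (Ioi c)]
          (fun y => y ^ 2 + (c ^ 2 - 2 * R ^ 2)) := by
        filter_upwards [self_mem_nhdsWithin] with y hy
        have hy2 : c ^ 2 ≤ y ^ 2 := by
          have : c < y := hy
          nlinarith
        rw [hgval, max_eq_left hy2]; ring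
      exact hq.hasDerivWithinAt.congr_of_eventuallyEq hev (by rw [hgc]; ring)
    have h0 : deriv g c = 0 :=
      (uniqueDiffWithinAt_Iio c).eq_deriv _ hd.hasDerivWithinAt hleft
    have h2 : deriv g c = 2 * c :=
      (uniqueDiffWithinAt_Ioi c).eq_deriv _ hd.hasDerivWithinAt hright
    rw [h0] at h2
    linarith
  refine ⟨key, ?_, ?_⟩
  · intro s hs
    obtain ⟨r, hr⟩ := hs.subset_closedBall 0
    set M : ℝ := max r 0 with hMdef
    have hM0 : 0 ≤ M := le_max_right _ _
    have hsub : s ⊆ closedBall 0 M :=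
      hr.trans (closedBall_subset_closedBall (le_max_left _ _))
    refine ⟨Real.toNNReal (4 * M), LipschitzOnWith.of_dist_le_mul ?_⟩
    intro x hx y hy
    have hx1 : |x.1| ≤ M := by
      have := mem_closedBall_zero_iff.mp (hsub hx)
      calc |x.1| = ‖x.1‖ := rfl
        _ ≤ ‖x‖ := norm_fst_le x
        _ ≤ M := this
    have hx2 : |x.2| ≤ M := by
      have := mem_closedBall_zero_iff.mp (hsub hx)
      calc |x.2| = ‖x.2‖ := rfl
        _ ≤ ‖x‖ := norm_snd_le x
        _ ≤ M := this
    have hy1 : |y.1| ≤ M := by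
      have := mem_closedBall_zero_iff.mp (hsub hy)
      calc |y.1| = ‖y.1‖ := rfl
        _ ≤ ‖y‖ := norm_fst_le y
        _ ≤ M := this
    have hy2 : |y.2| ≤ M := by
      have := mem_closedBall_zero_iff.mp (hsub hy)
      calc |y.2| = ‖y.2‖ := rfl
        _ ≤ ‖y‖ := norm_snd_le y
        _ ≤ M := this
    have e1 : |x.1 ^ 2 - y.1 ^ 2| ≤ 2 * M * |x.1 - y.1| := by
      have hre : x.1 ^ 2 - y.1 ^ 2 = (x.1 + y.1) * (x.1 - y.1) := by ring
      rw [hre, abs_mul]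
      have hab : |x.1 + y.1| ≤ 2 * M := (abs_add_le _ _).trans (by linarith)
      exact mul_le_mul_of_nonneg_right hab (abs_nonneg _)
    have e2 : |x.2 ^ 2 - y.2 ^ 2| ≤ 2 * M * |x.2 - y.2| := by
      have hre : x.2 ^ 2 - y.2 ^ 2 = (x.2 + y.2) * (x.2 - y.2) := by ring
      rw [hre, abs_mul]
      have hab : |x.2 + y.2| ≤ 2 * M := (abs_add_le _ _).trans (by linarith)
      exact mul_le_mul_of_nonneg_right hab (abs_nonneg _)
    have b1 : |max (x.1 ^ 2) (c ^ 2) - max (y.1 ^ 2) (c ^ 2)| ≤ |x.1 ^ 2 - y.1 ^ 2| :=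
      abs_max_sub_max_le_abs _ _ _
    have b2 : |max (x.2 ^ 2) (c ^ 2) - max (y.2 ^ 2) (c ^ 2)| ≤ |x.2 ^ 2 - y.2 ^ 2| :=
      abs_max_sub_max_le_abs _ _ _
    have hd1 : |x.1 - y.1| ≤ dist x y := by
      rw [← Real.dist_eq, Prod.dist_eq]; exact le_max_left _ _
    have hd2 : |x.2 - y.2| ≤ dist x y := by
      rw [← Real.dist_eq, Prod.dist_eq]; exact le_max_right _ _
    have hcoe : (Real.toNNReal (4 * M) : ℝ) = 4 * M :=
      Real.coe_toNNReal _ (by positivity)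
    rw [Real.dist_eq, hu, hu, ← hcdef, hcoe]
    have expand : (max (x.1 ^ 2) (c ^ 2) + max (x.2 ^ 2) (c ^ 2) - 2 * R ^ 2) -
        (max (y.1 ^ 2) (c ^ 2) + max (y.2 ^ 2) (c ^ 2) - 2 * R ^ 2) =
        (max (x.1 ^ 2) (c ^ 2) - max (y.1 ^ 2) (c ^ 2)) +
        (max (x.2 ^ 2) (c ^ 2) - max (y.2 ^ 2) (c ^ 2)) := by ring
    calc |max (x.1 ^ 2) (c ^ 2) + max (x.2 ^ 2) (c ^ 2) - 2 * R ^ 2 -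
          (max (y.1 ^ 2) (c ^ 2) + max (y.2 ^ 2) (c ^ 2) - 2 * R ^ 2)|
        = |(max (x.1 ^ 2) (c ^ 2) - max (y.1 ^ 2) (c ^ 2)) +
          (max (x.2 ^ 2) (c ^ 2) - max (y.2 ^ 2) (c ^ 2))| := by rw [expand]
      _ ≤ |max (x.1 ^ 2) (c ^ 2) - max (y.1 ^ 2) (c ^ 2)| +
          |max (x.2 ^ 2) (c ^ 2) - max (y.2 ^ 2) (c ^ 2)| := abs_add_le _ _
      _ ≤ 2 * M * |x.1 - y.1| + 2 * M * |x.2 - y.2| := by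
          exact add_le_add (b1.trans e1) (b2.trans e2)
      _ ≤ 2 * M * dist x y + 2 * M * dist x y := by
          have h2M : (0:ℝ) ≤ 2 * M := by positivity
          exact add_le_add (mul_le_mul_of_nonneg_left hd1 h2M)
            (mul_le_mul_of_nonneg_left hd2 h2M)
      _ = 4 * M * dist x y := by ring
  · intro h
    exact key (h.differentiable one_ne_zero (c, 0))
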